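/- For every n ≥ 1 and every m ≥ 1, the number R_{n,m} of functions f : Fin n → Fin n with exactly m ascending runs satisfies (as an identity of integers) R_{n,m} = n · C(n−1, m−1) · Σ_{ℓ=0}^{m−1} (−1)^{m−1−ℓ} · C(m−1, ℓ) · (ℓ+1)^{n−1}, where C(a,b) denotes the binomial coefficient. -/

import Mathlib

section Helpers
open Finset

lemma neg_one_pow_congr' {a b : ℕ} (h : a % 2 = b % 2) : ((-1:ℤ))^a = (-1)^b := by
  conv_lhs => rw [← Nat.div_add_mod a 2]
  conv_rhs => rw [← Nat.div_add_mod b 2]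
  rw [pow_add, pow_add, pow_mul, pow_mul, neg_one_sq, one_pow, one_pow, h]

lemma sum_drop_top (p : ℕ) (g : ℕ → ℤ) :
    ∑ j ∈ range (p+2), (-1:ℤ)^j * (p.choose j : ℤ) * g j
      = ∑ j ∈ range (p+1), (-1:ℤ)^j * (p.choose j : ℤ) * g j := by
  rw [Finset.sum_range_succ]
  simp [Nat.choose_succ_self]

lemma H2 (p : ℕ) (g : ℕ → ℤ) :
    ∑ t ∈ range (p+2), (-1:ℤ)^t * (t:ℤ) * ((p+1).choose t : ℤ) * g t
      = -((p:ℤ)+1) * ∑ s ∈ range (p+1), (-1:ℤ)^s * (p.choose s : ℤ) * g (s+1) := by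
  rw [Finset.sum_range_succ', Finset.mul_sum]
  simp only [Nat.cast_zero, mul_zero, zero_mul, add_zero, pow_zero, one_mul]
  apply Finset.sum_congr rfl
  intro i _
  have h : ((p:ℤ)+1) * (p.choose i : ℤ) = ((p+1).choose (i+1) : ℤ) * ((i:ℤ)+1) := by
    exact_mod_cast congrArg (Nat.cast : ℕ → ℤ) (Nat.add_one_mul_choose_eq p i)
  push_cast
  linear_combination (-(1:ℤ))^i * g (i+1) * h
lemma H1 (p : ℕ) (g : ℕ → ℤ) :
    ∑ j ∈ range (p+2), (-1:ℤ)^j * ((p+1).choose j : ℤ) * g j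
      = ∑ j ∈ range (p+1), (-1:ℤ)^j * (p.choose j : ℤ) * (g j - g (j+1)) := by
  have hT : ∑ i ∈ range (p+1), (-1:ℤ)^i * (p.choose (i+1) : ℤ) * g (i+1)
      = g 0 - ∑ j ∈ range (p+1), (-1:ℤ)^j * (p.choose j : ℤ) * g j := by
    have h0 : ∑ j ∈ range (p+2), (-1:ℤ)^j * (p.choose j : ℤ) * g j
        = (∑ i ∈ range (p+1), (-1:ℤ)^(i+1) * (p.choose (i+1) : ℤ) * g (i+1)) + g 0 := by
      rw [Finset.sum_range_succ']; simp
    rw [sum_drop_top] at h0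
    have h1 : ∑ i ∈ range (p+1), (-1:ℤ)^(i+1) * (p.choose (i+1) : ℤ) * g (i+1)
        = -∑ i ∈ range (p+1), (-1:ℤ)^i * (p.choose (i+1) : ℤ) * g (i+1) := by
      rw [← Finset.sum_neg_distrib]
      apply Finset.sum_congr rfl; intro i _; rw [pow_succ]; ring
    rw [h1] at h0
    linarith
  have hL : ∑ j ∈ range (p+2), (-1:ℤ)^j * ((p+1).choose j : ℤ) * g j
      = (∑ i ∈ range (p+1), (-1:ℤ)^(i+1) * ((p+1).choose (i+1) : ℤ) * g (i+1)) + g 0 := by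
    rw [Finset.sum_range_succ']; simp
  rw [hL]
  have hsplit : ∑ i ∈ range (p+1), (-1:ℤ)^(i+1) * ((p+1).choose (i+1) : ℤ) * g (i+1)
      = -(∑ i ∈ range (p+1), (-1:ℤ)^i * (p.choose i : ℤ) * g (i+1))
        - ∑ i ∈ range (p+1), (-1:ℤ)^i * (p.choose (i+1) : ℤ) * g (i+1) := by
    rw [← Finset.sum_neg_distrib, ← Finset.sum_sub_distrib]
    apply Finset.sum_congr rfl; intro i _
    have : ((p+1).choose (i+1) : ℤ) = (p.choose i : ℤ) + (p.choose (i+1) : ℤ) := by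
      exact_mod_cast congrArg (Nat.cast : ℕ → ℤ) (Nat.choose_succ_succ p i)
    rw [this, pow_succ]; ring
  rw [hsplit, hT]
  have hR : ∑ j ∈ range (p+1), (-1:ℤ)^j * (p.choose j : ℤ) * (g j - g (j+1))
      = (∑ j ∈ range (p+1), (-1:ℤ)^j * (p.choose j : ℤ) * g j)
        - ∑ j ∈ range (p+1), (-1:ℤ)^j * (p.choose j : ℤ) * g (j+1) := by
    rw [← Finset.sum_sub_distrib]
    apply Finset.sum_congr rfl; intro i _; ring
  rw [hR]
  ring
lemma diffChoose (p : ℕ) : ∀ (m t : ℕ),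
    ∑ j ∈ range (p+1), (-1:ℤ)^j * (p.choose j : ℤ) * ((m+j).choose t : ℤ)
      = (-1:ℤ)^p * (if p ≤ t then ((m.choose (t-p)) : ℤ) else 0) := by
  induction p with
  | zero => intro m t; simp
  | succ p ih =>
    intro m t
    rw [show p+1+1 = p+2 from rfl, H1 p (fun j => ((m+j).choose t : ℤ))]
    match t with
    | 0 =>
      have h : ∀ j ∈ range (p+1), (-1:ℤ)^j * (p.choose j : ℤ) * (((m+j).choose 0 : ℤ) - ((m+(j+1)).choose 0 : ℤ)) = 0 := by
        intro j _; simp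
      rw [Finset.sum_congr rfl h]
      simp
    | t+1 =>
      have hstep : ∀ j ∈ range (p+1), (-1:ℤ)^j * (p.choose j : ℤ) * (((m+j).choose (t+1) : ℤ) - ((m+(j+1)).choose (t+1) : ℤ))
          = -((-1:ℤ)^j * (p.choose j : ℤ) * ((m+j).choose t : ℤ)) := by
        intro j _
        have h : ((m+(j+1)).choose (t+1) : ℤ) = ((m+j).choose t : ℤ) + ((m+j).choose (t+1) : ℤ) := by
          have := Nat.choose_succ_succ (m+j) t
          rw [show m+(j+1) = (m+j)+1 from rfl]
          exact_mod_cast congrArg (Nat.cast : ℕ → ℤ) this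
        rw [h]; ring
      rw [Finset.sum_congr rfl hstep, Finset.sum_neg_distrib, ih m t]
      have h1 : (p ≤ t) = (p+1 ≤ t+1) := by simp
      have h2 : t - p = (t+1) - (p+1) := by omega
      rw [pow_succ]
      rw [← h2]
      by_cases hpt : p ≤ t
      · rw [if_pos hpt, if_pos (by omega : p+1 ≤ t+1)]; ring
      · rw [if_neg hpt, if_neg (by omega : ¬ (p+1 ≤ t+1))]; ring

lemma vanish : ∀ (N p : ℕ), N < p → ∀ x : ℤ,
    ∑ t ∈ range (p+1), (-1:ℤ)^t * (p.choose t : ℤ) * (x - t)^N = 0 := by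
  intro N
  induction N with
  | zero =>
    intro p hp x
    have h : ∀ t ∈ range (p+1), (-1:ℤ)^t * (p.choose t : ℤ) * (x - t)^0 = (-1:ℤ)^t * (p.choose t : ℤ) := by
      intro t _; rw [pow_zero, mul_one]
    rw [Finset.sum_congr rfl h]
    rw [Int.alternating_sum_range_choose]
    rw [if_neg (by omega : ¬ p = 0)]
  | succ N ih =>
    intro p hp x
    obtain ⟨q, rfl⟩ : ∃ q, p = q + 1 := ⟨p - 1, by omega⟩
    have hterm : ∀ t ∈ range (q+2), (-1:ℤ)^t * ((q+1).choose t : ℤ) * (x - t)^(N+1)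
        = x * ((-1:ℤ)^t * ((q+1).choose t : ℤ) * (x - t)^N)
          - (-1:ℤ)^t * (t:ℤ) * ((q+1).choose t : ℤ) * (x - t)^N := by
      intro t _; rw [pow_succ]; ring
    rw [Finset.sum_congr rfl hterm, Finset.sum_sub_distrib, ← Finset.mul_sum]
    rw [show q+2 = (q+1)+1 from rfl, ih (q+1) (by omega) x]
    rw [H2 q (fun s => (x - s)^N)]
    have h2 : ∑ s ∈ range (q+1), (-1:ℤ)^s * (q.choose s : ℤ) * (x - (s+1:ℕ))^N = 0 := by
      have h3 : ∀ s ∈ range (q+1), (-1:ℤ)^s * (q.choose s : ℤ) * ((x - (s+1:ℕ)):ℤ)^N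
          = (-1:ℤ)^s * (q.choose s : ℤ) * ((x-1) - s)^N := by
        intro s _; push_cast; ring_nf
      rw [Finset.sum_congr rfl h3]
      exact ih q (by omega) (x-1)
    have h4 : ∑ s ∈ range (q+1), (-1:ℤ)^s * (q.choose s : ℤ) * (x - ((s:ℤ)+1))^N = 0 := by
      have h3 : ∀ s ∈ range (q+1), (-1:ℤ)^s * (q.choose s : ℤ) * (x - ((s:ℤ)+1))^N
          = (-1:ℤ)^s * (q.choose s : ℤ) * ((x-1) - s)^N := by
        intro s _; ring_nf
      rw [Finset.sum_congr rfl h3]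
      exact ih q (by omega) (x-1)
    push_cast
    rw [h4]
    ring
noncomputable def Fc (a N k : ℕ) : ℤ :=
  (a.choose k : ℤ) * ∑ t ∈ range (k+1), (-1:ℤ)^t * (k.choose t : ℤ) * ((a:ℤ) - t)^N

lemma Fc_rec (N k a : ℕ) (ha : 1 ≤ a) :
    Fc a (N+1) (k+1) = a * Fc a N (k+1) + a * Fc (a-1) N k := by
  unfold Fc
  have hc : (a:ℤ) * ((a-1).choose k : ℤ) = (a.choose (k+1) : ℤ) * ((k:ℤ)+1) := by
    have := Nat.add_one_mul_choose_eq (a-1) k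
    rw [Nat.sub_add_cancel ha] at this
    exact_mod_cast congrArg (Nat.cast : ℕ → ℤ) this
  have hshift : ∑ t ∈ range (k+1), (-1:ℤ)^t * (k.choose t : ℤ) * (((a-1:ℕ):ℤ) - t)^N
      = ∑ t ∈ range (k+1), (-1:ℤ)^t * (k.choose t : ℤ) * ((a:ℤ) - (t+1))^N := by
    apply Finset.sum_congr rfl; intro t _
    have : ((a-1:ℕ):ℤ) = (a:ℤ) - 1 := by omega
    rw [this]; ring_nf
  have hH2 := H2 k (fun s => ((a:ℤ) - s)^N)
  -- goal restructure
  have key : ((k:ℤ)+1) * ∑ t ∈ range (k+1), (-1:ℤ)^t * (k.choose t : ℤ) * ((a:ℤ) - ((t:ℤ)+1))^N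
      = - ∑ t ∈ range (k+2), (-1:ℤ)^t * (t:ℤ) * ((k+1).choose t : ℤ) * ((a:ℤ) - t)^N := by
    rw [hH2]
    have hy : ∀ s ∈ range (k+1), (-1:ℤ)^s * (k.choose s : ℤ) * ((a:ℤ) - ((s+1:ℕ):ℤ))^N = (-1:ℤ)^s * (k.choose s : ℤ) * ((a:ℤ) - ((s:ℤ)+1))^N := by
      intro s _; push_cast; ring_nf
    rw [Finset.sum_congr rfl hy]
    ring
  have hterm : ∀ t ∈ range (k+2), (-1:ℤ)^t * ((k+1).choose t : ℤ) * ((a:ℤ) - t)^(N+1)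
      = (a:ℤ) * ((-1:ℤ)^t * ((k+1).choose t : ℤ) * ((a:ℤ) - t)^N)
        - (-1:ℤ)^t * (t:ℤ) * ((k+1).choose t : ℤ) * ((a:ℤ) - t)^N := by
    intro t _; rw [pow_succ]; ring
  calc (a.choose (k+1) : ℤ) * ∑ t ∈ range (k+2), (-1:ℤ)^t * ((k+1).choose t : ℤ) * ((a:ℤ) - t)^(N+1)
      = (a.choose (k+1) : ℤ) * ((a:ℤ) * ∑ t ∈ range (k+2), (-1:ℤ)^t * ((k+1).choose t : ℤ) * ((a:ℤ) - t)^N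
          - ∑ t ∈ range (k+2), (-1:ℤ)^t * (t:ℤ) * ((k+1).choose t : ℤ) * ((a:ℤ) - t)^N) := by
        rw [Finset.sum_congr rfl hterm, Finset.sum_sub_distrib, ← Finset.mul_sum]
    _ = (a:ℤ) * ((a.choose (k+1) : ℤ) * ∑ t ∈ range (k+2), (-1:ℤ)^t * ((k+1).choose t : ℤ) * ((a:ℤ) - t)^N)
          + (a.choose (k+1) : ℤ) * (((k:ℤ)+1) * ∑ t ∈ range (k+1), (-1:ℤ)^t * (k.choose t : ℤ) * ((a:ℤ) - ((t:ℤ)+1))^N) := by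
        rw [key]; ring
    _ = (a:ℤ) * ((a.choose (k+1) : ℤ) * ∑ t ∈ range (k+2), (-1:ℤ)^t * ((k+1).choose t : ℤ) * ((a:ℤ) - t)^N)
          + (a:ℤ) * (((a-1).choose k : ℤ) * ∑ t ∈ range (k+1), (-1:ℤ)^t * (k.choose t : ℤ) * (((a-1:ℕ):ℤ) - t)^N) := by
        rw [hshift]
        linear_combination (-(∑ t ∈ range (k+1), (-1:ℤ)^t * (k.choose t : ℤ) * ((a:ℤ) - ((t:ℤ)+1))^N)) * hc
noncomputable def Gs (a N k : ℕ) : ℤ :=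
  ∑ S ∈ (range N).powersetCard k,
    ∏ i ∈ range N, ((a:ℤ) - ((S.filter (fun j => i < j)).card : ℤ))

lemma Gs_zero (a N : ℕ) : Gs a N 0 = (a:ℤ)^N := by
  unfold Gs
  rw [Finset.powersetCard_zero, Finset.sum_singleton]
  simp

lemma Gs_rec (a N k : ℕ) (ha : 1 ≤ a) :
    Gs a (N+1) (k+1) = a * Gs a N (k+1) + a * Gs (a-1) N k := by
  unfold Gs
  rw [Finset.range_add_one, Finset.powersetCard_succ_insert (Finset.notMem_range_self)]
  rw [Finset.sum_union]
  · congr 1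
    · -- part 1 : S ⊆ range N
      rw [Finset.mul_sum]
      apply Finset.sum_congr rfl
      intro S hS
      rw [Finset.mem_powersetCard] at hS
      rw [Finset.prod_insert (Finset.notMem_range_self)]
      have h1 : S.filter (fun j => N < j) = ∅ := by
        rw [Finset.filter_eq_empty_iff]
        intro j hj
        have := hS.1 hj
        rw [Finset.mem_range] at this
        omega
      rw [h1]
      simp only [Finset.card_empty, Nat.cast_zero, sub_zero]
    · -- part 2 : image of insert N
      rw [Finset.sum_image, Finset.mul_sum]
      · apply Finset.sum_congr rfl
        intro S hS
        rw [Finset.mem_powersetCard] at hS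
        have hNS : N ∉ S := fun h => by have := hS.1 h; rw [Finset.mem_range] at this; omega
        rw [Finset.prod_insert (Finset.notMem_range_self)]
        have h1 : (insert N S).filter (fun j => N < j) = ∅ := by
          rw [Finset.filter_eq_empty_iff]
          intro j hj
          rw [Finset.mem_insert] at hj
          rcases hj with rfl | hj
          · omega
          · have := hS.1 hj; rw [Finset.mem_range] at this; omega
        rw [h1]
        simp only [Finset.card_empty, Nat.cast_zero, sub_zero]
        apply congrArg
        apply Finset.prod_congr rfl
        intro i hi
        rw [Finset.mem_range] at hi
        have h2 : (insert N S).filter (fun j => i < j) = insert N (S.filter (fun j => i < j)) := by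
          rw [Finset.filter_insert, if_pos hi]
        rw [h2, Finset.card_insert_of_notMem (fun h => hNS (Finset.mem_of_mem_filter N h))]
        have : ((a:ℤ) - ((S.filter (fun j => i < j)).card + 1 : ℕ)) = (((a-1:ℕ):ℤ) - (S.filter (fun j => i < j)).card) := by
          push_cast [Nat.cast_sub ha]
          ring
        exact_mod_cast this
      · intro S hS T hT hST
        rw [Finset.mem_coe, Finset.mem_powersetCard] at hS
        rw [Finset.mem_coe, Finset.mem_powersetCard] at hT
        have hNS : N ∉ S := fun h => by have := hS.1 h; rw [Finset.mem_range] at this; omega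
        have hNT : N ∉ T := fun h => by have := hT.1 h; rw [Finset.mem_range] at this; omega
        have := congrArg (fun U => Finset.erase U N) hST
        simpa [Finset.erase_insert hNS, Finset.erase_insert hNT] using this
  · -- disjoint
    rw [Finset.disjoint_left]
    intro S hS hS'
    rw [Finset.mem_powersetCard] at hS
    have hNS : N ∉ S := fun h => by have := hS.1 h; rw [Finset.mem_range] at this; omega
    rw [Finset.mem_image] at hS'
    obtain ⟨T, _, rfl⟩ := hS'
    exact hNS (Finset.mem_insert_self N T)
lemma Fc_zero (a N : ℕ) : Fc a N 0 = (a:ℤ)^N := by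
  unfold Fc; simp

lemma Gs_eq_Fc : ∀ (N k a : ℕ), k ≤ a → k ≤ N → Gs a N k = Fc a N k := by
  intro N
  induction N with
  | zero =>
    intro k a hka hk
    interval_cases k
    rw [Gs_zero, Fc_zero]
  | succ N ih =>
    intro k a hka hk
    match k with
    | 0 => rw [Gs_zero, Fc_zero]
    | k+1 =>
      have ha : 1 ≤ a := by omega
      rw [Gs_rec a N k ha, Fc_rec N k a ha]
      have h2 : Gs (a-1) N k = Fc (a-1) N k := ih k (a-1) (by omega) (by omega)
      have h1 : Gs a N (k+1) = Fc a N (k+1) := by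
        rcases Nat.lt_or_ge k N with h | h
        · exact ih (k+1) a hka (by omega)
        · -- k = N, k+1 > N: both zero
          have hkN : k = N := by omega
          subst hkN
          have hg : Gs a k (k+1) = 0 := by
            unfold Gs
            rw [Finset.powersetCard_eq_empty.mpr, Finset.sum_empty]
            rw [Finset.card_range]; omega
          have hf : Fc a k (k+1) = 0 := by
            unfold Fc
            rw [show k+1+1 = (k+1)+1 from rfl, vanish k (k+1) (by omega) ((a:ℤ))]
            ring
          rw [hg, hf]
      rw [h1, h2]
lemma delta_lemma (n m s : ℕ) (hs : s ≤ n) :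
    ∑ k ∈ range (n+1), (-1:ℤ)^(k-m) * (k.choose m : ℤ) * (s.choose k : ℤ)
      = if s = m then 1 else 0 := by
  rcases Nat.lt_or_ge s m with hsm | hsm
  · -- m > s : all terms vanish
    have h : ∀ k ∈ range (n+1), (-1:ℤ)^(k-m) * (k.choose m : ℤ) * (s.choose k : ℤ) = 0 := by
      intro k _
      rcases Nat.lt_or_ge k m with h1 | h1
      · rw [Nat.choose_eq_zero_of_lt h1]; simp
      · rw [Nat.choose_eq_zero_of_lt (by omega : s < k)]; simp
    rw [Finset.sum_congr rfl h, Finset.sum_const, if_neg (by omega : ¬ s = m)]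
    simp
  · -- m ≤ s
    have hsub : Finset.Ico m (s+1) ⊆ range (n+1) := by
      intro k hk
      rw [Finset.mem_Ico] at hk
      rw [Finset.mem_range]
      omega
    rw [← Finset.sum_subset hsub]
    · rw [Finset.sum_Ico_eq_sum_range]
      have hterm : ∀ i ∈ range (s+1-m), (-1:ℤ)^((m+i)-m) * ((m+i).choose m : ℤ) * (s.choose (m+i) : ℤ)
          = (s.choose m : ℤ) * ((-1:ℤ)^i * ((s-m).choose i : ℤ)) := by
        intro i hi
        rw [Finset.mem_range] at hi
        have h1 : (m+i)-m = i := by omega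
        have h2 : (s.choose (m+i)) * ((m+i).choose m) = s.choose m * (s-m).choose i := by
          have := Nat.choose_mul (n := s) (k := m+i) (show m ≤ m+i from Nat.le_add_right m i)
          simpa using this
        rw [h1]
        have h2' : ((s.choose (m+i)) : ℤ) * (((m+i).choose m) : ℤ) = (s.choose m : ℤ) * ((s-m).choose i : ℤ) := by
          exact_mod_cast congrArg (Nat.cast : ℕ → ℤ) h2
        linear_combination (-1:ℤ)^i * h2'
      rw [Finset.sum_congr rfl hterm, ← Finset.mul_sum]
      rw [show s+1-m = (s-m)+1 by omega]
      rw [Int.alternating_sum_range_choose]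
      rcases Nat.eq_or_lt_of_le hsm with rfl | hlt
      · simp
      · rw [if_neg (by omega : ¬ s - m = 0), if_neg (by omega : ¬ s = m)]
        ring
    · intro k hk hk2
      rw [Finset.mem_range] at hk
      rw [Finset.mem_Ico] at hk2
      rcases Nat.lt_or_ge k m with h1 | h1
      · rw [Nat.choose_eq_zero_of_lt h1]; simp
      · rw [Nat.choose_eq_zero_of_lt (by omega : s < k)]; simp
lemma Aeval (n m t : ℕ) (hm : m ≤ n) :
    ∑ k ∈ range (n+1), (-1:ℤ)^(k-m) * (k.choose m : ℤ) * (n.choose k : ℤ) * (k.choose t : ℤ)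
      = (-1:ℤ)^(n-m) * (n.choose m : ℤ) * (if n-m ≤ t then ((m.choose (t-(n-m))):ℤ) else 0) := by
  have hsub : Finset.Ico m (n+1) ⊆ range (n+1) := by
    intro k hk; rw [Finset.mem_Ico] at hk; rw [Finset.mem_range]; omega
  rw [← Finset.sum_subset hsub]
  · rw [Finset.sum_Ico_eq_sum_range]
    have hterm : ∀ i ∈ range (n+1-m),
        (-1:ℤ)^((m+i)-m) * ((m+i).choose m : ℤ) * (n.choose (m+i) : ℤ) * ((m+i).choose t : ℤ)
          = (n.choose m : ℤ) * ((-1:ℤ)^i * ((n-m).choose i : ℤ) * ((m+i).choose t : ℤ)) := by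
      intro i hi
      rw [Finset.mem_range] at hi
      have h1 : (m+i)-m = i := by omega
      have h2 : (n.choose (m+i)) * ((m+i).choose m) = n.choose m * (n-m).choose i := by
        have := Nat.choose_mul (n := n) (k := m+i) (show m ≤ m+i from Nat.le_add_right m i)
        simpa using this
      have h2' : ((n.choose (m+i)) : ℤ) * (((m+i).choose m) : ℤ) = (n.choose m : ℤ) * ((n-m).choose i : ℤ) := by
        exact_mod_cast congrArg (Nat.cast : ℕ → ℤ) h2
      rw [h1]
      linear_combination (-1:ℤ)^i * ((m+i).choose t : ℤ) * h2'
    rw [Finset.sum_congr rfl hterm, ← Finset.mul_sum]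
    rw [show n+1-m = (n-m)+1 by omega]
    rw [diffChoose (n-m) m t]
    ring
  · intro k hk hk2
    rw [Finset.mem_range] at hk
    rw [Finset.mem_Ico] at hk2
    have h1 : k < m := by omega
    rw [Nat.choose_eq_zero_of_lt h1]
    simp
end Helpers

/-- The number of ascending runs of `f`: the number of elements `j` that are the
start of an ascending run, i.e. every preimage `i` of `j` satisfies `j ≤ i`. -/
def numRuns {n : ℕ} (f : Fin n → Fin n) : ℕ :=
  (Finset.univ.filter (fun j : Fin n => ∀ i : Fin n, f i = j → j ≤ i)).card

section Counting
open Finset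

def runSet {n : ℕ} (f : Fin n → Fin n) : Finset (Fin n) :=
  Finset.univ.filter (fun j : Fin n => ∀ i : Fin n, f i = j → j ≤ i)

lemma numRuns_eq {n : ℕ} (f : Fin n → Fin n) : numRuns f = (runSet f).card := rfl

lemma numRuns_le {n : ℕ} (f : Fin n → Fin n) : numRuns f ≤ n := by
  rw [numRuns_eq]
  calc (runSet f).card ≤ (univ : Finset (Fin n)).card := Finset.card_filter_le _ _
  _ = n := by simp

lemma card_cap {n : ℕ} (S : Finset (Fin n)) :
    ((univ : Finset (Fin n → Fin n)).filter (fun f => S ⊆ runSet f)).card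
      = ∏ i : Fin n, (n - (S.filter (fun j => i < j)).card) := by
  have h1 : ((univ : Finset (Fin n → Fin n)).filter (fun f => S ⊆ runSet f))
      = Fintype.piFinset (fun i : Fin n => univ.filter (fun v : Fin n => v ∈ S → v ≤ i)) := by
    ext f
    simp only [Finset.mem_filter, Finset.mem_univ, true_and, Fintype.mem_piFinset]
    constructor
    · intro h i hfi
      have h2 := h hfi
      rw [runSet, Finset.mem_filter] at h2
      exact h2.2 i rfl
    · intro h j hj
      rw [runSet, Finset.mem_filter]
      refine ⟨Finset.mem_univ _, fun i hfi => ?_⟩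
      subst hfi
      exact h i hj
  rw [h1, Fintype.card_piFinset]
  apply Finset.prod_congr rfl
  intro i _
  have key := Finset.card_filter_add_card_filter_not
    (s := (univ : Finset (Fin n))) (p := fun v => v ∈ S → v ≤ i)
  have hneg : (univ : Finset (Fin n)).filter (fun v => ¬ (v ∈ S → v ≤ i)) = S.filter (fun j => i < j) := by
    ext v
    simp only [Finset.mem_filter, Finset.mem_univ, true_and, Classical.not_imp, not_le]
  rw [hneg] at key
  have hcard : (univ : Finset (Fin n)).card = n := by simp
  omega

lemma sum_choose_runs {n : ℕ} (k : ℕ) :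
    (∑ f : Fin n → Fin n, (numRuns f).choose k)
      = ∑ S ∈ (univ : Finset (Fin n)).powersetCard k,
          ((univ : Finset (Fin n → Fin n)).filter (fun f => S ⊆ runSet f)).card := by
  have h1 : ∀ f : Fin n → Fin n, (numRuns f).choose k
      = ∑ S ∈ (univ : Finset (Fin n)).powersetCard k, (if S ⊆ runSet f then 1 else 0) := by
    intro f
    rw [numRuns_eq, ← Finset.card_powersetCard]
    have h2 : (runSet f).powersetCard k
        = ((univ : Finset (Fin n)).powersetCard k).filter (fun S => S ⊆ runSet f) := by
      ext S
      simp only [Finset.mem_powersetCard, Finset.mem_filter]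
      constructor
      · intro h; exact ⟨⟨Finset.subset_univ _, h.2⟩, h.1⟩
      · intro h; exact ⟨h.2, h.1.2⟩
    rw [h2, Finset.card_filter]
  rw [Finset.sum_congr rfl (fun f _ => h1 f), Finset.sum_comm]
  apply Finset.sum_congr rfl
  intro S _
  rw [Finset.card_filter]

lemma inversion {n : ℕ} (m : ℕ) :
    ((((univ : Finset (Fin n → Fin n)).filter (fun f => numRuns f = m)).card : ℤ))
      = ∑ k ∈ range (n+1), (-1:ℤ)^(k-m) * (k.choose m : ℤ)
          * ∑ f : Fin n → Fin n, ((numRuns f).choose k : ℤ) := by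
  have h1 : ∀ k ∈ range (n+1), (-1:ℤ)^(k-m) * (k.choose m : ℤ)
          * ∑ f : Fin n → Fin n, ((numRuns f).choose k : ℤ)
      = ∑ f : Fin n → Fin n, (-1:ℤ)^(k-m) * (k.choose m : ℤ) * ((numRuns f).choose k : ℤ) := by
    intro k _
    rw [Finset.mul_sum]
  rw [Finset.sum_congr rfl h1, Finset.sum_comm]
  have h2 : ∀ f : Fin n → Fin n,
      ∑ k ∈ range (n+1), (-1:ℤ)^(k-m) * (k.choose m : ℤ) * ((numRuns f).choose k : ℤ)
        = if numRuns f = m then 1 else 0 := fun f => delta_lemma n m (numRuns f) (numRuns_le f)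
  rw [Finset.sum_congr rfl (fun f _ => h2 f)]
  rw [Finset.card_filter]
  push_cast
  rfl
lemma transfer {n : ℕ} (k : ℕ) (hk : k ≤ n) :
    ∑ S ∈ (univ : Finset (Fin n)).powersetCard k,
        ((∏ i : Fin n, (n - (S.filter (fun j => i < j)).card) : ℕ) : ℤ)
      = Gs n n k := by
  unfold Gs
  have hr : range n = (univ : Finset (Fin n)).map Fin.valEmbedding := by
    rw [Fin.map_valEmbedding_univ, Nat.Iio_eq_range]
  rw [hr, Finset.powersetCard_map, Finset.sum_map]
  apply Finset.sum_congr rfl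
  intro S hS
  rw [Finset.mem_powersetCard] at hS
  simp only [RelEmbedding.coe_toEmbedding, Finset.mapEmbedding_apply]
  -- cast the product
  have hcast : ((∏ i : Fin n, (n - (S.filter (fun j => i < j)).card) : ℕ) : ℤ)
      = ∏ i : Fin n, ((n : ℤ) - ((S.filter (fun j => i < j)).card : ℤ)) := by
    rw [Nat.cast_prod]
    apply Finset.prod_congr rfl
    intro i _
    have hle : (S.filter (fun j => i < j)).card ≤ n := by
      calc (S.filter (fun j => i < j)).card ≤ S.card := Finset.card_filter_le _ _
        _ = k := hS.2
        _ ≤ n := hk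
    omega
  rw [hcast]
  rw [Finset.prod_map]
  apply Finset.prod_congr rfl
  intro i _
  congr 2
  have : ((S.map Fin.valEmbedding).filter (fun j => (Fin.valEmbedding i) < j))
      = (S.filter (fun j => i < j)).map Fin.valEmbedding := by
    rw [Finset.filter_map]
    congr 1
  rw [this, Finset.card_map]

end Counting

/-- `R_{n,m}`: the number of functions on `Fin n` with exactly `m` ascending runs. -/
noncomputable def mappingRunCount (n m : ℕ) : ℕ :=
  Nat.card {f : Fin n → Fin n // numRuns f = m}

open Finset in
/-- Explicit alternating-sum formula for the number of `n`-mappings with exactly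
`m` ascending runs. -/
theorem mappingRunCount_explicit (n m : ℕ) (hn : 1 ≤ n) (hm : 1 ≤ m) :
    (mappingRunCount n m : ℤ) =
      (n : ℤ) * (Nat.choose (n - 1) (m - 1) : ℤ) *
        ∑ ℓ ∈ Finset.range m,
          (-1 : ℤ) ^ (m - 1 - ℓ) * (Nat.choose (m - 1) ℓ : ℤ) * ((ℓ : ℤ) + 1) ^ (n - 1) := by
  classical
  have hcount : mappingRunCount n m
      = ((univ : Finset (Fin n → Fin n)).filter (fun f => numRuns f = m)).card := by
    rw [mappingRunCount, Nat.card_eq_fintype_card, Fintype.card_subtype]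
  rcases Nat.lt_or_ge n m with hmn | hmn
  · -- m > n : both sides are zero
    have h1 : ((univ : Finset (Fin n → Fin n)).filter (fun f => numRuns f = m)) = ∅ := by
      rw [Finset.filter_eq_empty_iff]
      intro f _
      have := numRuns_le f
      omega
    have h2 : Nat.choose (n-1) (m-1) = 0 := Nat.choose_eq_zero_of_lt (by omega)
    rw [hcount, h1, h2]
    simp
  · -- main case : m ≤ n
    -- Step 1 : inversion + evaluation of the moments
    have e2 : ∀ k ∈ range (n+1),
        (∑ f : Fin n → Fin n, ((numRuns f).choose k : ℤ)) = Fc n n k := by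
      intro k hk
      rw [Finset.mem_range] at hk
      have hkn : k ≤ n := by omega
      have c1 : (∑ f : Fin n → Fin n, ((numRuns f).choose k : ℤ))
          = ((∑ f : Fin n → Fin n, (numRuns f).choose k : ℕ) : ℤ) := by
        push_cast; rfl
      rw [c1, sum_choose_runs]
      have c2 : ((∑ S ∈ (univ : Finset (Fin n)).powersetCard k,
            ((univ : Finset (Fin n → Fin n)).filter (fun f => S ⊆ runSet f)).card : ℕ) : ℤ)
          = ∑ S ∈ (univ : Finset (Fin n)).powersetCard k,
            ((∏ i : Fin n, (n - (S.filter (fun j => i < j)).card) : ℕ) : ℤ) := by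
        push_cast [card_cap]
        rfl
      rw [c2, transfer k hkn, Gs_eq_Fc n k n hkn hkn]
    have e1 : ((mappingRunCount n m : ℕ) : ℤ)
        = ∑ k ∈ range (n+1), (-1:ℤ)^(k-m) * (k.choose m : ℤ) * Fc n n k := by
      rw [hcount, inversion m]
      exact Finset.sum_congr rfl (fun k hk => by rw [e2 k hk])
    -- Step 2 : expand Fc and extend the inner sum
    have e3 : ∀ k ∈ range (n+1), (-1:ℤ)^(k-m) * (k.choose m : ℤ) * Fc n n k
        = ∑ t ∈ range (n+1), (-1:ℤ)^(k-m) * (k.choose m : ℤ) * (n.choose k : ℤ)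
            * ((-1:ℤ)^t * (k.choose t : ℤ) * ((n:ℤ) - t)^n) := by
      intro k hk
      rw [Finset.mem_range] at hk
      unfold Fc
      have hext : ∑ t ∈ range (k+1), (-1:ℤ)^t * (k.choose t : ℤ) * ((n:ℤ) - t)^n
          = ∑ t ∈ range (n+1), (-1:ℤ)^t * (k.choose t : ℤ) * ((n:ℤ) - t)^n := by
        apply Finset.sum_subset
        · intro t ht
          rw [Finset.mem_range] at ht ⊢
          omega
        · intro t _ ht2
          rw [Finset.mem_range] at ht2
          rw [Nat.choose_eq_zero_of_lt (by omega : k < t)]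
          simp
      rw [hext, Finset.mul_sum, Finset.mul_sum]
      apply Finset.sum_congr rfl
      intro t _
      ring
    rw [e1, Finset.sum_congr rfl e3, Finset.sum_comm]
    -- Step 3 : evaluate the inner sum over k via Aeval
    have e4 : ∀ t ∈ range (n+1),
        (∑ k ∈ range (n+1), (-1:ℤ)^(k-m) * (k.choose m : ℤ) * (n.choose k : ℤ)
            * ((-1:ℤ)^t * (k.choose t : ℤ) * ((n:ℤ) - t)^n))
        = (-1:ℤ)^t * ((n:ℤ) - t)^n *
            ((-1:ℤ)^(n-m) * (n.choose m : ℤ) * (if n-m ≤ t then ((m.choose (t-(n-m))):ℤ) else 0)) := by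
      intro t _
      rw [← Aeval n m t hmn, Finset.mul_sum]
      apply Finset.sum_congr rfl
      intro k _
      ring
    rw [Finset.sum_congr rfl e4]
    -- Step 4 : final reindexing
    set h : ℕ → ℤ := fun t => (-1:ℤ)^t * ((n:ℤ) - t)^n *
        ((-1:ℤ)^(n-m) * (n.choose m : ℤ) * (if n-m ≤ t then ((m.choose (t-(n-m))):ℤ) else 0)) with hdef
    have s1 : ∑ t ∈ range (n+1), h t = ∑ t ∈ range n, h t := by
      rw [Finset.sum_range_succ]
      have : h n = 0 := by
        rw [hdef]
        simp only []
        have : ((n:ℤ) - (n:ℕ)) = 0 := by ring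
        rw [this, zero_pow (by omega : n ≠ 0)]
        ring
      rw [this, add_zero]
    have s2 : ∑ t ∈ range n, h t = ∑ ℓ ∈ range n, h (n - 1 - ℓ) :=
      (Finset.sum_range_reflect h n).symm
    have s3 : ∑ ℓ ∈ range n, h (n - 1 - ℓ) = ∑ ℓ ∈ range m, h (n - 1 - ℓ) := by
      symm
      apply Finset.sum_subset
      · intro ℓ hl; rw [Finset.mem_range] at hl ⊢; omega
      · intro ℓ hl hl2
        rw [Finset.mem_range] at hl hl2
        rw [hdef]
        simp only []
        rw [if_neg (by omega : ¬ n - m ≤ n - 1 - ℓ)]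
        ring
    have s4 : ∀ ℓ ∈ range m, h (n - 1 - ℓ)
        = (n : ℤ) * ((n-1).choose (m-1) : ℤ) *
            ((-1:ℤ)^(m-1-ℓ) * ((m-1).choose ℓ : ℤ) * ((ℓ:ℤ)+1)^(n-1)) := by
      intro ℓ hl
      rw [Finset.mem_range] at hl
      rw [hdef]
      simp only []
      rw [if_pos (by omega : n - m ≤ n - 1 - ℓ)]
      have hc1 : (n - 1 - ℓ) - (n - m) = m - 1 - ℓ := by omega
      rw [hc1]
      have hcast : ((n - 1 - ℓ : ℕ) : ℤ) = (n:ℤ) - 1 - (ℓ:ℤ) := by omega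
      rw [hcast]
      have hx : ((n:ℤ) - ((n:ℤ) - 1 - (ℓ:ℤ))) = (ℓ:ℤ) + 1 := by ring
      rw [hx]
      have hsign : (-1:ℤ)^(n-1-ℓ) * (-1:ℤ)^(n-m) = (-1:ℤ)^(m-1-ℓ) := by
        rw [← pow_add]
        exact neg_one_pow_congr' (by omega)
      have hsym : (m.choose (m-1-ℓ)) = m.choose (ℓ+1) := by
        have h1 := Nat.choose_symm (show m-1-ℓ ≤ m by omega)
        rw [show m - (m-1-ℓ) = ℓ+1 by omega] at h1
        exact h1.symm
      rw [hsym]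
      have hpow : ((ℓ:ℤ)+1)^n = ((ℓ:ℤ)+1)^(n-1) * ((ℓ:ℤ)+1) := by
        conv_lhs => rw [show n = (n-1)+1 by omega]
        rw [pow_succ]
      rw [hpow]
      have cA : (n:ℤ) * ((n-1).choose (m-1) : ℤ) = (n.choose m : ℤ) * (m:ℤ) := by
        have := Nat.add_one_mul_choose_eq (n-1) (m-1)
        rw [Nat.sub_add_cancel hn, Nat.sub_add_cancel hm] at this
        exact_mod_cast congrArg (Nat.cast : ℕ → ℤ) this
      have cB : (m:ℤ) * ((m-1).choose ℓ : ℤ) = (m.choose (ℓ+1) : ℤ) * ((ℓ:ℤ)+1) := by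
        have := Nat.add_one_mul_choose_eq (m-1) ℓ
        rw [Nat.sub_add_cancel hm] at this
        exact_mod_cast congrArg (Nat.cast : ℕ → ℤ) this
      calc (-1:ℤ)^(n-1-ℓ) * (((ℓ:ℤ)+1)^(n-1) * ((ℓ:ℤ)+1))
            * ((-1:ℤ)^(n-m) * (n.choose m : ℤ) * (m.choose (ℓ+1) : ℤ))
          = ((-1:ℤ)^(n-1-ℓ) * (-1:ℤ)^(n-m)) * (((ℓ:ℤ)+1)^(n-1))
            * ((n.choose m : ℤ) * ((m.choose (ℓ+1) : ℤ) * ((ℓ:ℤ)+1))) := by ring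
        _ = (-1:ℤ)^(m-1-ℓ) * (((ℓ:ℤ)+1)^(n-1))
            * ((n.choose m : ℤ) * ((m:ℤ) * ((m-1).choose ℓ : ℤ))) := by rw [hsign, cB]
        _ = (-1:ℤ)^(m-1-ℓ) * (((ℓ:ℤ)+1)^(n-1))
            * (((n.choose m : ℤ) * (m:ℤ)) * ((m-1).choose ℓ : ℤ)) := by ring
        _ = (-1:ℤ)^(m-1-ℓ) * (((ℓ:ℤ)+1)^(n-1))
            * (((n:ℤ) * ((n-1).choose (m-1) : ℤ)) * ((m-1).choose ℓ : ℤ)) := by rw [cA]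
        _ = (n : ℤ) * ((n-1).choose (m-1) : ℤ) *
            ((-1:ℤ)^(m-1-ℓ) * ((m-1).choose ℓ : ℤ) * ((ℓ:ℤ)+1)^(n-1)) := by ring
    rw [s1, s2, s3, Finset.sum_congr rfl s4, ← Finset.mul_sum]
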